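/- If τ is a comonad morphism between the interpretations of two directed containers E = (C, ↓, o, ⊕) and E' = (C', ↓', o', ⊕'), then the quoted container morphism ⌜τ⌝ satisfies the three directed container morphism laws. Hence the interpretation of directed containers into comonads is fully faithful. -/

import Mathlib

/-- A directed container `(S ◁ P, ↓, o, ⊕)`. The laws involving positions whose
types only agree propositionally (laws 4 and 5) are stated with `HEq`. -/
structure DCont where
  S : Type
  P : S → Type
  dn : ∀ s : S, P s → S
  root : ∀ s : S, P s
  add : ∀ (s : S) (p : P s), P (dn s p) → P s
  law1 : ∀ s : S, dn s (root s) = s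
  law2 : ∀ (s : S) (p : P s) (p' : P (dn s p)), dn s (add s p p') = dn (dn s p) p'
  law3 : ∀ (s : S) (p : P s), add s p (root (dn s p)) = p
  law4 : ∀ (s : S) (p : P s) (phat : P (dn s (root s))),
    HEq p phat → add s (root s) phat = p
  law5 : ∀ (s : S) (p : P s) (p' : P (dn s p))
    (q : P (dn s (add s p p'))) (q' : P (dn (dn s p) p')),
    HEq q q' → add s (add s p p') q = add s p (add (dn s p) p' q')

/-- The carrier of the interpretation: `D X = Σ s : S, P s → X`. -/
def DCont.W (E : DCont) (X : Type) : Type := Σ s : E.S, E.P s → X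

/-- Functorial action of the carrier. -/
def DCont.wmap (E : DCont) {X Y : Type} (f : X → Y) : E.W X → E.W Y :=
  fun x => ⟨x.1, f ∘ x.2⟩

/-- Counit: `ε (s, v) = v o`. -/
def DCont.eps (E : DCont) {X : Type} : E.W X → X :=
  fun x => x.2 (E.root x.1)

/-- Comultiplication: `δ (s, v) = (s, λ p, (s ↓ p, λ p', v (p ⊕ p')))`. -/
def DCont.del (E : DCont) {X : Type} : E.W X → E.W (E.W X) :=
  fun x => ⟨x.1, fun p => ⟨E.dn x.1 p, fun p' => x.2 (E.add x.1 p p')⟩⟩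

/-- Shape map of the quote `⌜τ⌝`. -/
def qt {E E' : DCont} (τ : ∀ X : Type, E.W X → E'.W X) : E.S → E'.S :=
  fun s => (τ (E.P s) ⟨s, fun p => p⟩).1

/-- Position map of the quote `⌜τ⌝`. -/
def qq {E E' : DCont} (τ : ∀ X : Type, E.W X → E'.W X) :
    ∀ s : E.S, E'.P (qt τ s) → E.P s :=
  fun s => (τ (E.P s) ⟨s, fun p => p⟩).2

/-- If `τ` is a comonad morphism between the interpretations of two directed
containers, then the quoted container morphism `⌜τ⌝` satisfies the three
directed container morphism laws (the third stated with `HEq`, as the position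
types agree only propositionally).  Hence the interpretation of directed
containers into comonads is fully faithful. -/

private theorem sig_fst {A : Type} {B : A → Type} {a c : A} {b : B a} {d : B c}
    (h : (⟨a, b⟩ : Sigma B) = ⟨c, d⟩) : a = c := congrArg Sigma.fst h

private theorem sig_snd {A : Type} {B : A → Type} {a c : A} {b : B a} {d : B c}
    (h : (⟨a, b⟩ : Sigma B) = ⟨c, d⟩) : HEq b d := by cases h; rfl

private theorem hcongrFun {A B C : Type} (hAB : A = B) {f : A → C} {g : B → C}
    (hfg : HEq f g) {a : A} {b : B} (hab : HEq a b) : f a = g b := by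
  subst hAB; cases hfg; cases hab; rfl

theorem quote_of_comonad_morphism_is_dmor {E E' : DCont}
    (τ : ∀ X : Type, E.W X → E'.W X)
    (hnat : ∀ (X Y : Type) (f : X → Y) (x : E.W X),
      τ Y (E.wmap f x) = E'.wmap f (τ X x))
    (hcounit : ∀ (X : Type) (x : E.W X), E'.eps (τ X x) = E.eps x)
    (hcomult : ∀ (X : Type) (x : E.W X),
      E'.wmap (τ X) (τ (E.W X) (E.del x)) = E'.del (τ X x)) :
    (∀ (s : E.S) (p : E'.P (qt τ s)),
      qt τ (E.dn s (qq τ s p)) = E'.dn (qt τ s) p) ∧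
    (∀ s : E.S, E.root s = qq τ s (E'.root (qt τ s))) ∧
    (∀ (s : E.S) (p : E'.P (qt τ s)) (p' : E'.P (E'.dn (qt τ s) p))
      (phat : E'.P (qt τ (E.dn s (qq τ s p)))),
      HEq phat p' →
        E.add s (qq τ s p) (qq τ (E.dn s (qq τ s p)) phat)
          = qq τ s (E'.add (qt τ s) p p')) := by
  have tau_eq : ∀ (X : Type) (s : E.S) (v : E.P s → X),
      τ X ⟨s, v⟩ = ⟨qt τ s, v ∘ qq τ s⟩ := by
    intro X s v
    have h := hnat (E.P s) X v ⟨s, fun p => p⟩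
    have h1 : E.wmap v ⟨s, fun p => p⟩ = ⟨s, v⟩ := rfl
    rw [h1] at h
    rw [h]
    rfl
  have key : ∀ (s : E.S) (p : E'.P (qt τ s)),
      (⟨qt τ (E.dn s (qq τ s p)),
        (E.add s (qq τ s p)) ∘ qq τ (E.dn s (qq τ s p))⟩ : E'.W (E.P s))
      = ⟨E'.dn (qt τ s) p, fun p' => qq τ s (E'.add (qt τ s) p p')⟩ := by
    intro s p
    have h := hcomult (E.P s) ⟨s, fun p => p⟩
    have hl : E'.wmap (τ (E.P s)) (τ (E.W (E.P s)) (E.del ⟨s, fun p => p⟩))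
        = ⟨qt τ s, fun p => ⟨qt τ (E.dn s (qq τ s p)),
            (E.add s (qq τ s p)) ∘ qq τ (E.dn s (qq τ s p))⟩⟩ := by
      have hd : E.del (⟨s, fun p => p⟩ : E.W (E.P s))
          = ⟨s, fun p => ⟨E.dn s p, fun p' => E.add s p p'⟩⟩ := rfl
      erw [hd, tau_eq]
      show E'.wmap (τ (E.P s)) ⟨qt τ s, _⟩ = _
      refine congrArg (fun f => (⟨qt τ s, f⟩ : E'.W (E'.W (E.P s)))) ?_
      funext p
      show τ (E.P s) ⟨E.dn s (qq τ s p), fun p' => E.add s (qq τ s p) p'⟩ = _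
      rw [tau_eq]
    have hr : E'.del (τ (E.P s) ⟨s, fun p => p⟩)
        = ⟨qt τ s, fun p => ⟨E'.dn (qt τ s) p,
            fun p' => qq τ s (E'.add (qt τ s) p p')⟩⟩ := by
      rw [tau_eq]
      rfl
    rw [hl, hr] at h
    exact congrFun (eq_of_heq (sig_snd h)) p
  have law1 : ∀ (s : E.S) (p : E'.P (qt τ s)),
      qt τ (E.dn s (qq τ s p)) = E'.dn (qt τ s) p :=
    fun s p => sig_fst (key s p)
  refine ⟨law1, ?_, ?_⟩
  · intro s
    have h := hcounit (E.P s) ⟨s, fun p => p⟩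
    exact h.symm
  · intro s p p' phat hpp
    have h2 := sig_snd (key s p)
    exact hcongrFun (congrArg E'.P (law1 s p)) h2 hpp
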